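/- Zig-zag sum-rate bound: Let s_{j-B-1}, s_j, s_{j+1} be finite random variables with the Markov chain s_{j+1} → s_j → (f_j, s_{j-B-1}), where f_j is a function of s_j. Suppose H(s_j | s_{j-B-1}, s_{j+1}, f_j) ≤ nε and H(s_{j+1} | s_{j-B-1}, f_j, f_{j+1}) ≤ nε for some encoder output f_{j+1}. Then H(f_j) + H(f_{j+1}) ≥ n H'(s_j | s_{j-B-1}) + n H'(s_{j+1} | s_j) − 2nε, where n H'(·|·) denotes the corresponding n-letter conditional entropies H(s_j^n | s_{j-B-1}^n) etc. Formally, with single random variables: H(f_j) + H(f_{j+1}) ≥ H(s_j | s_{j-B-1}) + H(s_{j+1} | s_j) − 2nε. -/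

import Mathlib

open Finset

variable {Ω : Type} [Fintype Ω]

/-- Probability that the random variable `X` takes value `x`, under weights `μ`. -/
noncomputable def pr (μ : Ω → ℝ) {α : Type} [Fintype α] [DecidableEq α]
    (X : Ω → α) (x : α) : ℝ :=
  ∑ ω, if X ω = x then μ ω else 0

/-- Shannon entropy (base 2) of the random variable `X`. -/
noncomputable def ent (μ : Ω → ℝ) {α : Type} [Fintype α] [DecidableEq α]
    (X : Ω → α) : ℝ :=
  -∑ x, pr μ X x * Real.logb 2 (pr μ X x)

/-- Conditional Shannon entropy `H(X | Y) = H(X, Y) - H(Y)`. -/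
noncomputable def centr (μ : Ω → ℝ) {α β : Type} [Fintype α] [DecidableEq α]
    [Fintype β] [DecidableEq β] (X : Ω → α) (Y : Ω → β) : ℝ :=
  ent μ (fun ω => (X ω, Y ω)) - ent μ Y

/-- Conditional mutual information `I(X ; Y | Z) = H(X|Z) + H(Y|Z) - H(X,Y|Z)`. -/
noncomputable def mi (μ : Ω → ℝ) {α β γ : Type} [Fintype α] [DecidableEq α]
    [Fintype β] [DecidableEq β] [Fintype γ] [DecidableEq γ]
    (X : Ω → α) (Y : Ω → β) (Z : Ω → γ) : ℝ :=
  centr μ X Z + centr μ Y Z - centr μ (fun ω => (X ω, Y ω)) Z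

/-- `μ` is a probability mass function on `Ω`. -/
structure IsPMF (μ : Ω → ℝ) : Prop where
  nonneg : ∀ ω, 0 ≤ μ ω
  sum_one : ∑ ω, μ ω = 1

lemma pr_nonneg (μ : Ω → ℝ) (hμ : ∀ ω, 0 ≤ μ ω) {α : Type} [Fintype α] [DecidableEq α]
    (X : Ω → α) (x : α) : 0 ≤ pr μ X x :=
  Finset.sum_nonneg fun ω _ => by split_ifs <;> simp [hμ ω]

lemma le_pr (μ : Ω → ℝ) (hμ : ∀ ω, 0 ≤ μ ω) {α : Type} [Fintype α] [DecidableEq α]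
    (X : Ω → α) (ω : Ω) : μ ω ≤ pr μ X (X ω) := by
  have := Finset.single_le_sum (f := fun ω' => if X ω' = X ω then μ ω' else 0)
    (fun i _ => by show 0 ≤ (if X i = X ω then μ i else 0); split_ifs <;> simp [hμ i]) (Finset.mem_univ ω)
  simpa [pr] using this

lemma pr_congr (μ : Ω → ℝ) {α β : Type} [Fintype α] [DecidableEq α] [Fintype β] [DecidableEq β]
    (X : Ω → α) (Y : Ω → β) (ω : Ω) (h : ∀ ω', X ω' = X ω ↔ Y ω' = Y ω) :
    pr μ X (X ω) = pr μ Y (Y ω) :=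
  Finset.sum_congr rfl fun ω' _ => by rw [if_congr (h ω') rfl rfl]

lemma pr_mono (μ : Ω → ℝ) (hμ : ∀ ω, 0 ≤ μ ω) {α β : Type} [Fintype α] [DecidableEq α]
    [Fintype β] [DecidableEq β]
    (X : Ω → α) (Y : Ω → β) (ω : Ω) (h : ∀ ω', X ω' = X ω → Y ω' = Y ω) :
    pr μ X (X ω) ≤ pr μ Y (Y ω) := by
  apply Finset.sum_le_sum
  intro i _
  by_cases hx : X i = X ω
  · rw [if_pos hx, if_pos (h i hx)]
  · rw [if_neg hx]; split_ifs <;> simp [hμ i]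

lemma sum_pr_mul (μ : Ω → ℝ) {α : Type} [Fintype α] [DecidableEq α]
    (X : Ω → α) (g : α → ℝ) : ∑ x, pr μ X x * g x = ∑ ω, μ ω * g (X ω) := by
  unfold pr
  simp only [Finset.sum_mul, ite_mul, zero_mul]
  rw [Finset.sum_comm]
  simp

lemma pr_sum_one (μ : Ω → ℝ) (h1 : ∑ ω, μ ω = 1) {α : Type} [Fintype α] [DecidableEq α]
    (X : Ω → α) : ∑ x, pr μ X x = 1 := by
  unfold pr
  rw [Finset.sum_comm]
  simpa using h1

lemma pr_marginal (μ : Ω → ℝ) {α γ : Type} [Fintype α] [DecidableEq α]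
    [Fintype γ] [DecidableEq γ] (X : Ω → α) (Z : Ω → γ) (z : γ) :
    ∑ x, pr μ (fun ω => (X ω, Z ω)) (x, z) = pr μ Z z := by
  unfold pr
  rw [Finset.sum_comm]
  apply Finset.sum_congr rfl
  intro ω _
  by_cases hz : Z ω = z
  · simp [Prod.mk.injEq, hz]
  · simp [Prod.mk.injEq, hz]

lemma ent_omega (μ : Ω → ℝ) {α : Type} [Fintype α] [DecidableEq α] (X : Ω → α) :
    ent μ X = -∑ ω, μ ω * Real.logb 2 (pr μ X (X ω)) := by
  rw [ent, sum_pr_mul μ X (fun x => Real.logb 2 (pr μ X x))]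

lemma ent_congr (μ : Ω → ℝ) {α β : Type} [Fintype α] [DecidableEq α] [Fintype β] [DecidableEq β]
    (X : Ω → α) (Y : Ω → β) (h : ∀ ω₁ ω₂, X ω₁ = X ω₂ ↔ Y ω₁ = Y ω₂) :
    ent μ X = ent μ Y := by
  rw [ent_omega, ent_omega]
  congr 1
  apply Finset.sum_congr rfl
  intro ω _
  rw [pr_congr μ X Y ω (fun ω' => h ω' ω)]

lemma centr_congr (μ : Ω → ℝ) {α α' β β' : Type} [Fintype α] [DecidableEq α]
    [Fintype α'] [DecidableEq α'] [Fintype β] [DecidableEq β] [Fintype β'] [DecidableEq β']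
    (X : Ω → α) (X' : Ω → α') (Y : Ω → β) (Y' : Ω → β')
    (hX : ∀ ω₁ ω₂, X ω₁ = X ω₂ ↔ X' ω₁ = X' ω₂)
    (hY : ∀ ω₁ ω₂, Y ω₁ = Y ω₂ ↔ Y' ω₁ = Y' ω₂) :
    centr μ X Y = centr μ X' Y' := by
  unfold centr
  rw [ent_congr μ Y Y' hY, ent_congr μ (fun ω => (X ω, Y ω)) (fun ω => (X' ω, Y' ω))
    (by intro ω₁ ω₂; simp only [Prod.mk.injEq]; rw [hX ω₁ ω₂, hY ω₁ ω₂])]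

lemma centr_chain (μ : Ω → ℝ) {α β γ : Type} [Fintype α] [DecidableEq α]
    [Fintype β] [DecidableEq β] [Fintype γ] [DecidableEq γ]
    (X : Ω → α) (Y : Ω → β) (Z : Ω → γ) :
    centr μ (fun ω => (X ω, Y ω)) Z = centr μ X Z + centr μ Y (fun ω => (X ω, Z ω)) := by
  unfold centr
  have h : ent μ (fun ω => ((X ω, Y ω), Z ω)) = ent μ (fun ω => (Y ω, (X ω, Z ω))) := by
    apply ent_congr
    intro ω₁ ω₂
    simp only [Prod.mk.injEq]
    tauto
  simp only []
  rw [h]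
  ring

lemma ent_unit (μ : Ω → ℝ) (h1 : ∑ ω, μ ω = 1) : ent μ (fun _ : Ω => ()) = 0 := by
  rw [ent_omega]
  have : pr μ (fun _ : Ω => ()) () = 1 := by simpa [pr] using h1
  simp [this]

lemma centr_unit (μ : Ω → ℝ) (h1 : ∑ ω, μ ω = 1) {α : Type} [Fintype α] [DecidableEq α]
    (X : Ω → α) : centr μ X (fun _ => ()) = ent μ X := by
  unfold centr
  rw [ent_unit μ h1, ent_congr μ (fun ω => (X ω, ())) X (by intro ω₁ ω₂; simp)]
  ring

lemma mi_nonneg (μ : Ω → ℝ) (hnn : ∀ ω, 0 ≤ μ ω) (h1 : ∑ ω, μ ω = 1)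
    {α β γ : Type} [Fintype α] [DecidableEq α] [Fintype β] [DecidableEq β]
    [Fintype γ] [DecidableEq γ] (X : Ω → α) (Y : Ω → β) (Z : Ω → γ) :
    0 ≤ mi μ X Y Z := by
  have hlog2 : (0:ℝ) < Real.log 2 := Real.log_pos one_lt_two
  have hmi : mi μ X Y Z = ∑ ω, μ ω *
      (Real.logb 2 (pr μ (fun ω => ((X ω, Y ω), Z ω)) ((X ω, Y ω), Z ω))
        + Real.logb 2 (pr μ Z (Z ω))
        - Real.logb 2 (pr μ (fun ω => (X ω, Z ω)) (X ω, Z ω))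
        - Real.logb 2 (pr μ (fun ω => (Y ω, Z ω)) (Y ω, Z ω))) := by
    simp only [mi, centr, ent_omega]
    simp only [mul_add, mul_sub, Finset.sum_add_distrib, Finset.sum_sub_distrib]
    ring
  -- the sum S = ∑ μω rω is at most 1
  have hS : ∑ ω, μ ω *
      (pr μ (fun ω => (X ω, Z ω)) (X ω, Z ω) * pr μ (fun ω => (Y ω, Z ω)) (Y ω, Z ω)
        / (pr μ (fun ω => ((X ω, Y ω), Z ω)) ((X ω, Y ω), Z ω) * pr μ Z (Z ω))) ≤ 1 := by
    have hrw := sum_pr_mul μ (fun ω => ((X ω, Y ω), Z ω))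
      (fun v => pr μ (fun ω => (X ω, Z ω)) (v.1.1, v.2) * pr μ (fun ω => (Y ω, Z ω)) (v.1.2, v.2)
        / (pr μ (fun ω => ((X ω, Y ω), Z ω)) v * pr μ Z v.2))
    rw [← hrw]
    calc ∑ v : (α × β) × γ, pr μ (fun ω => ((X ω, Y ω), Z ω)) v *
          (pr μ (fun ω => (X ω, Z ω)) (v.1.1, v.2) * pr μ (fun ω => (Y ω, Z ω)) (v.1.2, v.2)
            / (pr μ (fun ω => ((X ω, Y ω), Z ω)) v * pr μ Z v.2))
        ≤ ∑ v : (α × β) × γ, pr μ (fun ω => (X ω, Z ω)) (v.1.1, v.2)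
            * pr μ (fun ω => (Y ω, Z ω)) (v.1.2, v.2) / pr μ Z v.2 := by
          apply Finset.sum_le_sum
          intro v _
          rcases eq_or_lt_of_le (pr_nonneg μ hnn (fun ω => ((X ω, Y ω), Z ω)) v) with h0 | hpos
          · rw [← h0, zero_mul]
            exact div_nonneg (mul_nonneg (pr_nonneg μ hnn _ _) (pr_nonneg μ hnn _ _))
              (pr_nonneg μ hnn _ _)
          · rw [← mul_div_assoc, mul_div_mul_left _ _ (ne_of_gt hpos)]
      _ = ∑ z, (∑ x, pr μ (fun ω => (X ω, Z ω)) (x, z))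
            * ((∑ y, pr μ (fun ω => (Y ω, Z ω)) (y, z)) / pr μ Z z) := by
          rw [Fintype.sum_prod_type]
          rw [Finset.sum_comm]
          apply Finset.sum_congr rfl
          intro z _
          rw [Fintype.sum_prod_type]
          simp only [mul_div_assoc, ← Finset.mul_sum, ← Finset.sum_div, ← Finset.sum_mul]
      _ = ∑ z, pr μ Z z * (pr μ Z z / pr μ Z z) := by
          apply Finset.sum_congr rfl
          intro z _
          rw [pr_marginal μ X Z z, pr_marginal μ Y Z z]
      _ ≤ ∑ z, pr μ Z z := by
          apply Finset.sum_le_sum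
          intro z _
          rcases eq_or_ne (pr μ Z z) 0 with h0 | hne
          · simp [h0]
          · rw [div_self hne, mul_one]
      _ = 1 := pr_sum_one μ h1 Z
  rw [hmi]
  have key : ∀ ω : Ω, μ ω * ((1 - pr μ (fun ω => (X ω, Z ω)) (X ω, Z ω)
        * pr μ (fun ω => (Y ω, Z ω)) (Y ω, Z ω)
        / (pr μ (fun ω => ((X ω, Y ω), Z ω)) ((X ω, Y ω), Z ω) * pr μ Z (Z ω)))
        / Real.log 2)
      ≤ μ ω *
      (Real.logb 2 (pr μ (fun ω => ((X ω, Y ω), Z ω)) ((X ω, Y ω), Z ω))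
        + Real.logb 2 (pr μ Z (Z ω))
        - Real.logb 2 (pr μ (fun ω => (X ω, Z ω)) (X ω, Z ω))
        - Real.logb 2 (pr μ (fun ω => (Y ω, Z ω)) (Y ω, Z ω))) := by
    intro ω
    rcases eq_or_lt_of_le (hnn ω) with h0 | hpos
    · rw [← h0]; simp
    · apply mul_le_mul_of_nonneg_left _ (le_of_lt hpos)
      have hP : 0 < pr μ (fun ω => ((X ω, Y ω), Z ω)) ((X ω, Y ω), Z ω) :=
        lt_of_lt_of_le hpos (le_pr μ hnn (fun ω => ((X ω, Y ω), Z ω)) ω)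
      have hZ : 0 < pr μ Z (Z ω) := lt_of_lt_of_le hpos (le_pr μ hnn Z ω)
      have hXZ : 0 < pr μ (fun ω => (X ω, Z ω)) (X ω, Z ω) :=
        lt_of_lt_of_le hpos (le_pr μ hnn (fun ω => (X ω, Z ω)) ω)
      have hYZ : 0 < pr μ (fun ω => (Y ω, Z ω)) (Y ω, Z ω) :=
        lt_of_lt_of_le hpos (le_pr μ hnn (fun ω => (Y ω, Z ω)) ω)
      set a := pr μ (fun ω => (X ω, Z ω)) (X ω, Z ω)
      set b := pr μ (fun ω => (Y ω, Z ω)) (Y ω, Z ω)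
      set c := pr μ (fun ω => ((X ω, Y ω), Z ω)) ((X ω, Y ω), Z ω)
      set d := pr μ Z (Z ω)
      have hr : 0 < a * b / (c * d) := by positivity
      have hlog := Real.log_le_sub_one_of_pos hr
      have hsplit : Real.log (a * b / (c * d)) =
          Real.log a + Real.log b - (Real.log c + Real.log d) := by
        rw [Real.log_div (by positivity) (by positivity),
          Real.log_mul (ne_of_gt hXZ) (ne_of_gt hYZ),
          Real.log_mul (ne_of_gt hP) (ne_of_gt hZ)]
      rw [hsplit] at hlog
      simp only [Real.logb]
      rw [show Real.log c / Real.log 2 + Real.log d / Real.log 2 - Real.log a / Real.log 2 -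
          Real.log b / Real.log 2
          = (Real.log c + Real.log d - Real.log a - Real.log b) / Real.log 2 by ring]
      rw [div_le_div_iff_of_pos_right hlog2]
      linarith [hlog]
  have heq : ∑ ω, μ ω * ((1 - pr μ (fun ω => (X ω, Z ω)) (X ω, Z ω)
        * pr μ (fun ω => (Y ω, Z ω)) (Y ω, Z ω)
        / (pr μ (fun ω => ((X ω, Y ω), Z ω)) ((X ω, Y ω), Z ω) * pr μ Z (Z ω)))
        / Real.log 2)
      = (1 - ∑ ω, μ ω *
        (pr μ (fun ω => (X ω, Z ω)) (X ω, Z ω) * pr μ (fun ω => (Y ω, Z ω)) (Y ω, Z ω)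
        / (pr μ (fun ω => ((X ω, Y ω), Z ω)) ((X ω, Y ω), Z ω) * pr μ Z (Z ω))))
        / Real.log 2 := by
    rw [sub_div, Finset.sum_div]
    rw [show (1:ℝ) / Real.log 2 = (∑ ω, μ ω) / Real.log 2 by rw [h1]]
    rw [Finset.sum_div, ← Finset.sum_sub_distrib]
    apply Finset.sum_congr rfl
    intro ω _
    ring
  refine le_trans ?_ (Finset.sum_le_sum fun ω _ => key ω)
  rw [heq]
  apply div_nonneg _ (le_of_lt hlog2)
  linarith [hS]

lemma mi_eq (μ : Ω → ℝ) {α β γ : Type} [Fintype α] [DecidableEq α] [Fintype β] [DecidableEq β]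
    [Fintype γ] [DecidableEq γ] (X : Ω → α) (Y : Ω → β) (Z : Ω → γ) :
    mi μ X Y Z = centr μ X Z - centr μ X (fun ω => (Y ω, Z ω)) := by
  have hswap : centr μ (fun ω => (X ω, Y ω)) Z = centr μ (fun ω => (Y ω, X ω)) Z :=
    centr_congr μ _ _ Z Z (by intro ω₁ ω₂; simp only [Prod.mk.injEq]; tauto)
      (fun _ _ => Iff.rfl)
  have hchain := centr_chain μ Y X Z
  simp only [mi]
  rw [hswap, hchain]
  ring

lemma cond_reduce (μ : Ω → ℝ) (hnn : ∀ ω, 0 ≤ μ ω) (h1 : ∑ ω, μ ω = 1)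
    {α β γ : Type} [Fintype α] [DecidableEq α] [Fintype β] [DecidableEq β]
    [Fintype γ] [DecidableEq γ] (X : Ω → α) (Y : Ω → β) (Z : Ω → γ) :
    centr μ X (fun ω => (Y ω, Z ω)) ≤ centr μ X Z := by
  have h := mi_nonneg μ hnn h1 X Y Z
  rw [mi_eq] at h
  linarith

lemma centr_le_ent (μ : Ω → ℝ) (hnn : ∀ ω, 0 ≤ μ ω) (h1 : ∑ ω, μ ω = 1)
    {α β : Type} [Fintype α] [DecidableEq α] [Fintype β] [DecidableEq β]
    (X : Ω → α) (Y : Ω → β) : centr μ X Y ≤ ent μ X := by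
  have h := cond_reduce μ hnn h1 X Y (fun _ => ())
  rw [centr_unit μ h1 X] at h
  refine le_trans (le_of_eq ?_) h
  exact centr_congr μ X X Y (fun ω => (Y ω, ())) (fun _ _ => Iff.rfl)
    (by intro ω₁ ω₂; simp)


/-- zig-zag sum-rate bound with memoryless encoders
`f_j = F(s_j)`, `f_{j+1} = G(s_{j+1})`:
`H(f_j) + H(f_{j+1}) ≥ H(s_j | s_{j-B-1}) + H(s_{j+1} | s_j) − 2nε`.
Here `sA = s_{j-B-1}`, `sJ = s_j`, `sJ1 = s_{j+1}`. -/
theorem zigzag_sum_rate_bound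
    {S A1 A2 : Type} [Fintype S] [DecidableEq S]
    [Fintype A1] [DecidableEq A1] [Fintype A2] [DecidableEq A2]
    (μ : Ω → ℝ) (hμ : IsPMF μ) (n ε : ℝ) (hn : 0 < n) (hε : 0 ≤ ε)
    (sA sJ sJ1 : Ω → S) (F : S → A1) (G : S → A2)
    (hMarkov : centr μ sA (fun ω => (sJ ω, sJ1 ω)) = centr μ sA sJ)
    (hFano1 : centr μ sJ (fun ω => (sA ω, sJ1 ω, F (sJ ω))) ≤ n * ε)
    (hFano2 : centr μ sJ1 (fun ω => (sA ω, F (sJ ω), G (sJ1 ω))) ≤ n * ε) :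
    ent μ (fun ω => F (sJ ω)) + ent μ (fun ω => G (sJ1 ω))
      ≥ centr μ sJ sA + centr μ sJ1 sJ - 2 * n * ε := by
  obtain ⟨hnn, h1⟩ := hμ
  -- conditioning reduces entropy
  have e1 : centr μ (fun ω => F (sJ ω)) sA ≤ ent μ (fun ω => F (sJ ω)) :=
    centr_le_ent μ hnn h1 _ _
  have e2 : centr μ (fun ω => G (sJ1 ω)) (fun ω => (sA ω, F (sJ ω)))
      ≤ ent μ (fun ω => G (sJ1 ω)) := centr_le_ent μ hnn h1 _ _
  -- chain rule on (fJ, fJ1) given sA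
  have e3 : centr μ (fun ω => (F (sJ ω), G (sJ1 ω))) sA
      = centr μ (fun ω => F (sJ ω)) sA
        + centr μ (fun ω => G (sJ1 ω)) (fun ω => (F (sJ ω), sA ω)) :=
    centr_chain μ _ _ sA
  have e3' : centr μ (fun ω => G (sJ1 ω)) (fun ω => (F (sJ ω), sA ω))
      = centr μ (fun ω => G (sJ1 ω)) (fun ω => (sA ω, F (sJ ω))) :=
    centr_congr μ _ _ _ _ (fun _ _ => Iff.rfl)
      (by intro ω₁ ω₂; simp only [Prod.mk.injEq]; tauto)
  -- chain rule introducing (sJ, sJ1)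
  have e4 : centr μ (fun ω => ((F (sJ ω), G (sJ1 ω)), (sJ ω, sJ1 ω))) sA
      = centr μ (fun ω => (F (sJ ω), G (sJ1 ω))) sA
        + centr μ (fun ω => (sJ ω, sJ1 ω))
            (fun ω => ((F (sJ ω), G (sJ1 ω)), sA ω)) :=
    centr_chain μ _ _ sA
  have e5 : centr μ (fun ω => ((F (sJ ω), G (sJ1 ω)), (sJ ω, sJ1 ω))) sA
      = centr μ (fun ω => (sJ ω, sJ1 ω)) sA := by
    apply centr_congr μ _ _ sA sA _ (fun _ _ => Iff.rfl)
    intro ω₁ ω₂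
    simp only [Prod.mk.injEq]
    constructor
    · rintro ⟨-, h⟩; exact h
    · rintro ⟨h, h'⟩; exact ⟨⟨by rw [h], by rw [h']⟩, h, h'⟩
  -- chain rule splitting (sJ, sJ1) given (fJ, fJ1, sA)
  have e6a : centr μ (fun ω => (sJ ω, sJ1 ω)) (fun ω => ((F (sJ ω), G (sJ1 ω)), sA ω))
      = centr μ (fun ω => (sJ1 ω, sJ ω)) (fun ω => ((F (sJ ω), G (sJ1 ω)), sA ω)) :=
    centr_congr μ _ _ _ _ (by intro ω₁ ω₂; simp only [Prod.mk.injEq]; tauto)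
      (fun _ _ => Iff.rfl)
  have e6b : centr μ (fun ω => (sJ1 ω, sJ ω)) (fun ω => ((F (sJ ω), G (sJ1 ω)), sA ω))
      = centr μ sJ1 (fun ω => ((F (sJ ω), G (sJ1 ω)), sA ω))
        + centr μ sJ (fun ω => (sJ1 ω, ((F (sJ ω), G (sJ1 ω)), sA ω))) :=
    centr_chain μ _ _ _
  -- Fano bounds
  have e7 : centr μ sJ1 (fun ω => ((F (sJ ω), G (sJ1 ω)), sA ω)) ≤ n * ε := by
    refine le_trans (le_of_eq ?_) hFano2
    exact centr_congr μ sJ1 sJ1 _ _ (fun _ _ => Iff.rfl)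
      (by intro ω₁ ω₂; simp only [Prod.mk.injEq]; tauto)
  have e8 : centr μ sJ (fun ω => (sJ1 ω, ((F (sJ ω), G (sJ1 ω)), sA ω))) ≤ n * ε := by
    have hc : centr μ sJ (fun ω => (sJ1 ω, ((F (sJ ω), G (sJ1 ω)), sA ω)))
        = centr μ sJ (fun ω => (G (sJ1 ω), (sA ω, sJ1 ω, F (sJ ω)))) := by
      apply centr_congr μ sJ sJ _ _ (fun _ _ => Iff.rfl)
      intro ω₁ ω₂
      simp only [Prod.mk.injEq]
      constructor <;> (intro h; simp_all)
    rw [hc]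
    refine le_trans ?_ hFano1
    exact cond_reduce μ hnn h1 sJ (fun ω => G (sJ1 ω))
      (fun ω => (sA ω, sJ1 ω, F (sJ ω)))
  -- chain rule on (sJ, sJ1) given sA
  have e9 : centr μ (fun ω => (sJ ω, sJ1 ω)) sA
      = centr μ sJ sA + centr μ sJ1 (fun ω => (sJ ω, sA ω)) :=
    centr_chain μ _ _ sA
  -- Markov step
  have e10 : centr μ sJ1 (fun ω => (sJ ω, sA ω)) = centr μ sJ1 sJ := by
    have m1 : ent μ (fun ω => (sJ1 ω, (sJ ω, sA ω)))
        = ent μ (fun ω => (sA ω, (sJ ω, sJ1 ω))) :=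
      ent_congr μ _ _ (by intro ω₁ ω₂; simp only [Prod.mk.injEq]; tauto)
    have m2 : ent μ (fun ω => (sJ ω, sA ω)) = ent μ (fun ω => (sA ω, sJ ω)) :=
      ent_congr μ _ _ (by intro ω₁ ω₂; simp only [Prod.mk.injEq]; tauto)
    have m3 : ent μ (fun ω => (sJ1 ω, sJ ω)) = ent μ (fun ω => (sJ ω, sJ1 ω)) :=
      ent_congr μ _ _ (by intro ω₁ ω₂; simp only [Prod.mk.injEq]; tauto)
    simp only [centr] at hMarkov ⊢
    linarith [m1, m2, m3, hMarkov]
  linarith [e1, e2, e3, e3', e4, e5, e6a, e6b, e7, e8, e9, e10]
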